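/- Let K be a field, n ≥ 1, let α, β : ℤ → K, and let z_1, …, z_n ∈ K with all occurring shifted powers defined and nonzero. Then ∑_{ω ∈ S_n} sgn(ω) · ∏_{i=1}^{n} [z_i (z_i|β)^{-ω(i)} / (z_i;α)^{1-ω(i)}] = ∏_{i=1}^{n} [z_i (z_i|β)^{-n}] · ∏_{1 ≤ i < j ≤ n} (z_i - z_j)(1 - α_{1-i} β_{1-j}). -/

import Mathlib

/-- Doubly-indexed shifted power `(z;α)^k`: `(1-zα_1)⋯(1-zα_k)` for `k > 0`, `1` for
`k = 0`, and `[(1-zα_0)(1-zα_{-1})⋯(1-zα_{k+1})]⁻¹` for `k < 0`. -/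
noncomputable def cpow {K : Type*} [Field K] (z : K) (α : ℤ → K) (k : ℤ) : K :=
  if 0 ≤ k then ∏ j ∈ Finset.range k.toNat, (1 - z * α ((j : ℤ) + 1))
  else (∏ j ∈ Finset.range (-k).toNat, (1 - z * α (-(j : ℤ))))⁻¹

/-- Doubly-indexed shifted power `(z|β)^k`: `(z-β_1)⋯(z-β_k)` for `k > 0`, `1` for
`k = 0`, and `[(z-β_0)(z-β_{-1})⋯(z-β_{k+1})]⁻¹` for `k < 0`. -/
noncomputable def ppow {K : Type*} [Field K] (z : K) (β : ℤ → K) (k : ℤ) : K :=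
  if 0 ≤ k then ∏ j ∈ Finset.range k.toNat, (z - β ((j : ℤ) + 1))
  else (∏ j ∈ Finset.range (-k).toNat, (z - β (-(j : ℤ))))⁻¹

section Stmt10Aux

open Polynomial Finset

variable {K : Type*} [Field K]

noncomputable def Pp (n : ℕ) (a b : ℕ → K) (k : ℕ) : K[X] :=
  (∏ l ∈ Finset.Ico (k+1) n, (X - C (b l))) * ∏ l ∈ Finset.range k, (1 - C (a l) * X)

lemma Pp_natDegree_lt (n : ℕ) (a b : ℕ → K) (k : ℕ) (hk : k < n) :
    (Pp n a b k).natDegree < n := by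
  have h1 : (∏ l ∈ Finset.Ico (k+1) n, (X - C (b l))).natDegree ≤ n - (k+1) := by
    refine le_trans (Polynomial.natDegree_prod_le _ _) ?_
    refine le_trans (Finset.sum_le_card_nsmul _ _ 1 ?_) ?_
    · intro l _; simp [Polynomial.natDegree_X_sub_C]
    · simp [Nat.card_Ico]
  have h2 : (∏ l ∈ Finset.range k, ((1 : K[X]) - C (a l) * X)).natDegree ≤ k := by
    refine le_trans (Polynomial.natDegree_prod_le _ _) ?_
    refine le_trans (Finset.sum_le_card_nsmul _ _ 1 ?_) ?_
    · intro l _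
      refine le_trans (Polynomial.natDegree_sub_le _ _) ?_
      simp only [Polynomial.natDegree_one, max_le_iff]
      exact ⟨by omega, le_trans (Polynomial.natDegree_mul_le) (by simp)⟩
    · simp
  have := Polynomial.natDegree_mul_le (p := ∏ l ∈ Finset.Ico (k+1) n, (X - C (b l)))
    (q := ∏ l ∈ Finset.range k, ((1:K[X]) - C (a l) * X))
  unfold Pp
  omega

noncomputable def Cm (n : ℕ) (a b : ℕ → K) : Matrix (Fin n) (Fin n) K :=
  fun m k => (Pp n a b (k : ℕ)).coeff (m : ℕ)


lemma Pp_zero_eq (m : ℕ) (a b : ℕ → K) :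
    Pp (m+2) a b 0 = (X - C (b 1)) * Pp (m+1) a (fun l => b (l+1)) 0 := by
  unfold Pp
  rw [Finset.prod_eq_prod_Ico_succ_bot (by omega : 0+1 < m+2) (fun l => X - C (b l))]
  rw [show ∏ l ∈ Finset.Ico (0+1) (m+1), (X - C (b (l+1))) = ∏ l ∈ Finset.Ico (0+2) (m+2), (X - C (b l)) from by
    have := Finset.prod_Ico_add' (fun l => X - C (b l)) 1 (m+1) 1; simpa using this]
  ring

lemma Pp_succ_eq (m : ℕ) (a b : ℕ → K) (j : ℕ) (hj : j < m+1) :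
    Pp (m+2) a b (j+1) =
      C (1 - a j * b (j+1)) * Pp (m+1) a (fun l => b (l+1)) j - C (a j) * Pp (m+2) a b j := by
  unfold Pp
  rw [Finset.prod_range_succ]
  rw [Finset.prod_eq_prod_Ico_succ_bot (by omega : j+1 < m+2) (fun l => X - C (b l))]
  rw [show ∏ l ∈ Finset.Ico (j+1) (m+1), (X - C (b (l+1))) = ∏ l ∈ Finset.Ico (j+1+1) (m+2), (X - C (b l)) from by
    have := Finset.prod_Ico_add' (fun l => X - C (b l)) (j+1) (m+1) 1; simpa using this]
  rw [map_sub, map_mul, map_one]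
  ring


lemma det_Cm_succ (m : ℕ) (a b : ℕ → K) :
    (Cm (m+2) a b).det = (-1)^(m+1) * (∏ j ∈ Finset.range (m+1), (1 - a j * b (j+1))) *
      (Cm (m+1) a (fun l => b (l+1))).det := by
  set b' : ℕ → K := fun l => b (l+1) with hb'
  set Q : ℕ → K[X] := fun k => Pp (m+1) a b' k with hQ
  -- N : after column operations
  set N : Matrix (Fin (m+2)) (Fin (m+2)) K := fun i k =>
    (Fin.cases ((X - C (b 1)) * Q 0) (fun j : Fin (m+1) => C (1 - a (j:ℕ) * b ((j:ℕ)+1)) * Q (j:ℕ)) k : K[X]).coeff (i:ℕ) with hN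
  have hdet1 : (Cm (m+2) a b).det = N.det := by
    refine Matrix.det_eq_of_forall_col_eq_smul_add_pred (fun j => -(a (j:ℕ))) ?_ ?_
    · intro i
      simp only [Cm, N, Fin.cases_zero, Fin.val_zero]
      rw [Pp_zero_eq m a b]
    · intro i j
      simp only [Cm, N, Fin.cases_succ, Fin.val_succ, Fin.coe_castSucc]
      rw [Pp_succ_eq m a b (j:ℕ) j.isLt]
      simp only [Polynomial.coeff_sub, Polynomial.coeff_C_mul]
      ring
  -- N' : scalar factors removed
  set N' : Matrix (Fin (m+2)) (Fin (m+2)) K := fun i k =>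
    (Fin.cases ((X - C (b 1)) * Q 0) (fun j : Fin (m+1) => Q (j:ℕ)) k : K[X]).coeff (i:ℕ) with hN'
  set v : Fin (m+2) → K := Fin.cases 1 (fun j : Fin (m+1) => 1 - a (j:ℕ) * b ((j:ℕ)+1)) with hv
  have hdet2 : N.det = (∏ j ∈ Finset.range (m+1), (1 - a j * b (j+1))) * N'.det := by
    have : N = Matrix.of (fun i k => v k * N' i k) := by
      ext i k
      refine Fin.cases ?_ (fun j => ?_) k
      · simp [N, N', v]
      · simp only [N, N', v, Fin.cases_succ, Matrix.of_apply]
        rw [Polynomial.coeff_C_mul]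
    rw [this, Matrix.det_mul_row]
    congr 1
    rw [Fin.prod_univ_succ]
    simp only [v, Fin.cases_zero, Fin.cases_succ, one_mul]
    exact Fin.prod_univ_eq_prod_range (fun p => 1 - a p * b (p+1)) (m+1)
  -- N'' : update column 0
  set N'' : Matrix (Fin (m+2)) (Fin (m+2)) K := fun i k =>
    (Fin.cases (X * Q 0) (fun j : Fin (m+1) => Q (j:ℕ)) k : K[X]).coeff (i:ℕ) with hN''
  have hdet3 : N''.det = N'.det := by
    have h01 : (0 : Fin (m+2)) ≠ 1 := by simp [Fin.ext_iff]
    have := Matrix.det_updateCol_add_smul_self N' h01 (b 1)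
    rw [← this]
    congr 1
    ext i k
    rw [Matrix.updateCol_apply]
    by_cases hk : k = 0
    · subst hk
      simp only [if_pos rfl, N', N'', Fin.cases_zero, smul_eq_mul]
      have h1 : (1 : Fin (m+2)) = (0 : Fin (m+1)).succ := rfl
      rw [h1, Fin.cases_succ]
      have : (X : K[X]) * Q 0 = (X - C (b 1)) * Q 0 + C (b 1) * Q 0 := by ring
      rw [this, Polynomial.coeff_add, Polynomial.coeff_C_mul]
      simp
    · rcases Fin.eq_succ_of_ne_zero hk with ⟨j, rfl⟩
      simp [if_neg hk, N', N'']
  -- M'' : cyclic shift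
  set M'' : Matrix (Fin (m+2)) (Fin (m+2)) K := fun i k =>
    (Fin.lastCases (X * Q 0) (fun j : Fin (m+1) => Q (j:ℕ)) k : K[X]).coeff (i:ℕ) with hM''
  have hdet4 : N''.det = (-1)^(m+1) * M''.det := by
    have hsub : N'' = M''.submatrix id (finRotate (m+2)).symm := by
      ext i k
      refine Fin.cases ?_ (fun j => ?_) k
      · have : (finRotate (m+2)).symm 0 = Fin.last (m+1) := by
          rw [Equiv.symm_apply_eq, finRotate_last]
        rw [Matrix.submatrix_apply, this]
        simp [N'', M'']
      · have : (finRotate (m+2)).symm j.succ = Fin.castSucc j := by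
          rw [Equiv.symm_apply_eq, finRotate_succ_apply, Fin.coeSucc_eq_succ]
        rw [Matrix.submatrix_apply, this]
        simp [N'', M'']
    rw [hsub, Matrix.det_permute', Equiv.Perm.sign_symm, sign_finRotate]
    push_cast
    ring
  have hQ0monic : (Q 0).Monic := by
    have : Q 0 = ∏ l ∈ Finset.Ico 1 (m+1), (X - C (b' l)) := by
      simp [Q, Pp]
    rw [this]
    exact monic_prod_of_monic _ _ (fun l _ => monic_X_sub_C _)
  have hQ0deg : (Q 0).natDegree = m := by
    have h : Q 0 = ∏ l ∈ Finset.Ico 1 (m+1), (X - C (b' l)) := by simp [Q, Pp]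
    rw [h, Polynomial.natDegree_prod_of_monic _ _ (fun l _ => monic_X_sub_C _)]
    simp [Polynomial.natDegree_X_sub_C]
  have hdet5 : M''.det = (Cm (m+1) a b').det := by
    rw [Matrix.det_succ_row M'' (Fin.last (m+1))]
    rw [Fin.sum_univ_castSucc]
    have hzero : ∀ j : Fin (m+1),
        (-1:K) ^ ((Fin.last (m+1) : ℕ) + ((Fin.castSucc j : Fin (m+2)) : ℕ)) *
          M'' (Fin.last (m+1)) (Fin.castSucc j) *
          (M''.submatrix (Fin.last (m+1)).succAbove (Fin.castSucc j).succAbove).det = 0 := by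
      intro j
      have : M'' (Fin.last (m+1)) (Fin.castSucc j) = 0 := by
        simp only [M'', Fin.lastCases_castSucc]
        exact Polynomial.coeff_eq_zero_of_natDegree_lt
          (by simpa using Pp_natDegree_lt (m+1) a b' (j:ℕ) j.isLt)
      rw [this]; ring
    rw [Finset.sum_eq_zero (fun j _ => hzero j), zero_add]
    have hentry : M'' (Fin.last (m+1)) (Fin.last (m+1)) = 1 := by
      simp only [M'', Fin.lastCases_last, Fin.val_last]
      rw [Polynomial.coeff_X_mul, ← hQ0deg]
      exact hQ0monic.coeff_natDegree
    rw [hentry]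
    have hsign : (-1:K) ^ ((Fin.last (m+1) : ℕ) + ((Fin.last (m+1)) : ℕ)) = 1 := by
      rw [Fin.val_last, ← two_mul, pow_mul]
      norm_num
    rw [hsign]
    rw [one_mul, one_mul]
    congr 1
    ext i k
    simp [Matrix.submatrix, Fin.succAbove_last, M'', Cm, Q, Fin.lastCases_castSucc]
  rw [hdet1, hdet2, hdet3.symm, hdet4, hdet5]
  ring


lemma pair_prod_split (m : ℕ) (f : ℕ → ℕ → K) :
    ∏ p ∈ Finset.range (m+2), ∏ q ∈ Finset.Ico (p+1) (m+2), f p q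
      = (∏ j ∈ Finset.range (m+1), f j (j+1)) *
        ∏ p ∈ Finset.range (m+1), ∏ q ∈ Finset.Ico (p+1) (m+1), f p (q+1) := by
  rw [Finset.prod_range_succ, Finset.Ico_self, Finset.prod_empty, mul_one,
    ← Finset.prod_mul_distrib]
  refine Finset.prod_congr rfl fun p hp => ?_
  rw [Finset.mem_range] at hp
  rw [Finset.prod_eq_prod_Ico_succ_bot (by omega : p+1 < m+2)]
  congr 1
  have := (Finset.prod_Ico_add' (fun q => f p q) (p+1) (m+1) 1).symm
  simpa using this

lemma det_Cm (n : ℕ) (a : ℕ → K) : ∀ b : ℕ → K,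
    (Cm n a b).det = (-1)^(n.choose 2) *
      ∏ p ∈ Finset.range n, ∏ q ∈ Finset.Ico (p+1) n, (1 - a p * b q) := by
  induction n with
  | zero => intro b; simp [Cm, Matrix.det_fin_zero]
  | succ m ih =>
    intro b
    cases m with
    | zero =>
      rw [Matrix.det_fin_one]
      simp [Cm, Pp]
    | succ m' =>
      rw [det_Cm_succ m' a b, ih (fun l => b (l+1)), pair_prod_split m' (fun p q => 1 - a p * b q)]
      have hch : (m'+2).choose 2 = (m'+1) + (m'+1).choose 2 := by
        rw [Nat.choose_succ_succ, Nat.choose_one_right]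
      rw [hch, pow_add]
      ring


lemma ppow_neg (z : K) (β : ℤ → K) (k : ℕ) :
    ppow z β (-(k:ℤ)) = (∏ j ∈ Finset.range k, (z - β (-(j:ℤ))))⁻¹ := by
  cases k with
  | zero => simp [ppow]
  | succ k =>
    rw [ppow, if_neg (by omega)]
    norm_num

lemma cpow_neg (z : K) (α : ℤ → K) (k : ℕ) :
    cpow z α (-(k:ℤ)) = (∏ j ∈ Finset.range k, (1 - z * α (-(j:ℤ))))⁻¹ := by
  cases k with
  | zero => simp [cpow]
  | succ k =>
    rw [cpow, if_neg (by omega)]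
    norm_num

lemma prod_Ioi_fin (n : ℕ) (f : ℕ → ℕ → K) :
    ∏ i : Fin n, ∏ j ∈ Finset.Ioi i, f (i:ℕ) (j:ℕ)
      = ∏ p ∈ Finset.range n, ∏ q ∈ Finset.Ico (p+1) n, f p q := by
  rw [← Fin.prod_univ_eq_prod_range (fun p => ∏ q ∈ Finset.Ico (p+1) n, f p q) n]
  refine Finset.prod_congr rfl fun i _ => ?_
  have hlt := i.isLt
  rw [show Finset.Ico ((i:ℕ)+1) n = Finset.Ioo (i:ℕ) n from by
    ext q; simp only [Finset.mem_Ico, Finset.mem_Ioo]; omega]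
  rw [← Fin.map_valEmbedding_Ioi, Finset.prod_map]
  rfl

lemma sum_card_Ioi (n : ℕ) : ∑ i : Fin n, (Finset.Ioi i).card = n.choose 2 := by
  simp only [Fin.card_Ioi]
  rw [Fin.sum_univ_eq_sum_range (fun p => n - 1 - p) n]
  rw [Finset.sum_range_reflect (fun p => p) n]
  have h2 := Finset.sum_range_id_mul_two n
  have h3 := Nat.choose_two_right n
  omega


end Stmt10Aux

/-- The shifted-power Vandermonde determinant evaluation:
`∑_{ω ∈ S_n} sgn(ω) ∏_i z_i (z_i|β)^{-ω(i)}/(z_i;α)^{1-ω(i)}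
  = ∏_i z_i (z_i|β)^{-n} · ∏_{i<j} (z_i - z_j)(1 - α_{1-i} β_{1-j})`
(indices `1`-indexed: `ω(i) = (ω i : ℕ) + 1`, etc.). -/
theorem stmt_10 {K : Type*} [Field K] (n : ℕ) (hn : 1 ≤ n) (α β : ℤ → K) (z : Fin n → K)
    (hβ : ∀ i j, z i - β j ≠ 0) (hα : ∀ i j, 1 - z i * α j ≠ 0) :
    ∑ ω : Equiv.Perm (Fin n), ((Equiv.Perm.sign ω : ℤ) : K) *
        ∏ i, (z i * ppow (z i) β (-(((ω i : ℕ) : ℤ) + 1)) /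
          cpow (z i) α (1 - (((ω i : ℕ) : ℤ) + 1))) =
      (∏ i, z i * ppow (z i) β (-(n : ℤ))) *
        ∏ i, ∏ j ∈ Finset.Ioi i, (z i - z j) *
          (1 - α (1 - (((i : ℕ) : ℤ) + 1)) * β (1 - (((j : ℕ) : ℤ) + 1))) := by
  classical
  set a : ℕ → K := fun l => α (-(l:ℤ)) with ha
  set bb : ℕ → K := fun l => β (-(l:ℤ)) with hbb
  set c : Fin n → K := fun i => z i * ppow (z i) β (-(n:ℤ)) with hc
  -- per-entry rewriting
  have hterm : ∀ (i : Fin n) (k : ℕ), k < n →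
      z i * ppow (z i) β (-((k:ℤ)+1)) / cpow (z i) α (1 - ((k:ℤ)+1))
        = c i * ((∏ l ∈ Finset.Ico (k+1) n, (z i - bb l)) *
            ∏ l ∈ Finset.range k, (1 - z i * a l)) := by
    intro i k hk
    have h1 : (-((k:ℤ)+1)) = -(((k+1 : ℕ)):ℤ) := by push_cast; ring
    have h2 : (1 - ((k:ℤ)+1)) = -((k:ℕ):ℤ) := by push_cast; ring
    rw [h1, h2, ppow_neg, cpow_neg]
    simp only [hc]
    rw [ppow_neg]
    have hsplit : (∏ j ∈ Finset.range n, (z i - β (-(j:ℤ))))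
        = (∏ j ∈ Finset.range (k+1), (z i - β (-(j:ℤ)))) *
          ∏ j ∈ Finset.Ico (k+1) n, (z i - β (-(j:ℤ))) :=
      (Finset.prod_range_mul_prod_Ico _ (by omega)).symm
    have hIco_ne : (∏ j ∈ Finset.Ico (k+1) n, (z i - β (-(j:ℤ)))) ≠ 0 :=
      Finset.prod_ne_zero_iff.mpr (fun j _ => hβ i _)
    rw [hsplit, mul_inv]
    have h3 : (∏ j ∈ Finset.range (k+1), (z i - β (-(j:ℤ)))) ≠ 0 :=
      Finset.prod_ne_zero_iff.mpr (fun j _ => hβ i _)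
    have h4 : (∏ j ∈ Finset.range k, (1 - z i * α (-(j:ℤ)))) ≠ 0 :=
      Finset.prod_ne_zero_iff.mpr (fun j _ => hα i _)
    simp only [hbb, ha]
    field_simp
  -- determinant form of the LHS
  set T : Matrix (Fin n) (Fin n) K := Matrix.of fun k i : Fin n =>
    z i * ppow (z i) β (-(((k : ℕ) : ℤ) + 1)) / cpow (z i) α (1 - (((k : ℕ) : ℤ) + 1)) with hT
  have hlhs : (∑ ω : Equiv.Perm (Fin n), ((Equiv.Perm.sign ω : ℤ) : K) *
      ∏ i, (z i * ppow (z i) β (-(((ω i : ℕ) : ℤ) + 1)) /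
        cpow (z i) α (1 - (((ω i : ℕ) : ℤ) + 1)))) = T.det := by
    rw [Matrix.det_apply']
    rfl
  rw [hlhs]
  -- T = columns scaled by c of transpose of (vandermonde * Cm)
  -- T = columns scaled by c of transpose of (vandermonde * Cm)
  have hmul : ∀ (i k : Fin n), (Matrix.vandermonde z * Cm n a bb) i k
      = (∏ l ∈ Finset.Ico ((k:ℕ)+1) n, (z i - bb l)) * ∏ l ∈ Finset.range (k:ℕ), (1 - z i * a l) := by
    intro i k
    rw [Matrix.mul_apply]
    have hm : ∀ m : Fin n, Matrix.vandermonde z i m * Cm n a bb m k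
        = (fun m : ℕ => (Pp n a bb (k:ℕ)).coeff m * z i ^ m) (m:ℕ) := by
      intro m; simp [Matrix.vandermonde, Cm, mul_comm]
    rw [Finset.sum_congr rfl (fun m _ => hm m)]
    rw [Fin.sum_univ_eq_sum_range (fun m => (Pp n a bb (k:ℕ)).coeff m * z i ^ m) n]
    rw [← Polynomial.eval_eq_sum_range' (Pp_natDegree_lt n a bb (k:ℕ) k.isLt) (z i)]
    unfold Pp
    rw [Polynomial.eval_mul, Polynomial.eval_prod, Polynomial.eval_prod]
    simp only [Polynomial.eval_sub, Polynomial.eval_one, Polynomial.eval_mul,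
      Polynomial.eval_C, Polynomial.eval_X]
    congr 1
    exact Finset.prod_congr rfl fun l _ => by ring
  have hTeq : T = Matrix.of fun k i : Fin n =>
      c i * ((Matrix.vandermonde z * Cm n a bb) i k) := by
    ext k i
    rw [hT]
    simp only [Matrix.of_apply]
    rw [hterm i (k : ℕ) k.isLt, hmul i k]
  have hdetT : T.det = (∏ i, c i) *
      ((∏ i, ∏ j ∈ Finset.Ioi i, (z j - z i)) *
        ((-1:K)^(n.choose 2) *
          ∏ p ∈ Finset.range n, ∏ q ∈ Finset.Ico (p+1) n, (1 - a p * bb q))) := by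
    rw [hTeq]
    have hre : (Matrix.of fun k i : Fin n => c i * (Matrix.vandermonde z * Cm n a bb) i k)
        = Matrix.of fun k i : Fin n => c i * (Matrix.vandermonde z * Cm n a bb).transpose k i := rfl
    rw [hre, Matrix.det_mul_row c ((Matrix.vandermonde z * Cm n a bb).transpose)]
    rw [Matrix.det_transpose, Matrix.det_mul, Matrix.det_vandermonde, det_Cm n a bb]
  rw [hdetT]
  -- now the right-hand side
  have hα' : ∀ p : ℕ, α (1 - ((p:ℤ)+1)) = a p := by
    intro p; simp only [ha]; norm_num
  have hβ' : ∀ p : ℕ, β (1 - ((p:ℤ)+1)) = bb p := by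
    intro p; simp only [hbb]; norm_num
  simp only [hα', hβ']
  have hsplit2 : ∏ i : Fin n, ∏ j ∈ Finset.Ioi i, ((z i - z j) * (1 - a (i:ℕ) * bb (j:ℕ)))
      = (∏ i : Fin n, ∏ j ∈ Finset.Ioi i, (z i - z j)) *
        (∏ i : Fin n, ∏ j ∈ Finset.Ioi i, (1 - a (i:ℕ) * bb (j:ℕ))) := by
    rw [← Finset.prod_mul_distrib]
    exact Finset.prod_congr rfl fun i _ => Finset.prod_mul_distrib
  rw [hsplit2]
  have hv2 : (∏ i : Fin n, ∏ j ∈ Finset.Ioi i, (z i - z j))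
      = (-1:K)^(n.choose 2) * ∏ i : Fin n, ∏ j ∈ Finset.Ioi i, (z j - z i) := by
    have h1 : ∀ i : Fin n, ∏ j ∈ Finset.Ioi i, (z i - z j)
        = (-1:K)^(Finset.Ioi i).card * ∏ j ∈ Finset.Ioi i, (z j - z i) := by
      intro i
      rw [← Finset.prod_const, ← Finset.prod_mul_distrib]
      exact Finset.prod_congr rfl fun j _ => by ring
    rw [Finset.prod_congr rfl (fun i _ => h1 i), Finset.prod_mul_distrib,
      Finset.prod_pow_eq_pow_sum, sum_card_Ioi]
  rw [hv2, prod_Ioi_fin n (fun p q => 1 - a p * bb q)]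
  ring
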